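/- Let A ⊂ (ℤ/8ℤ)^3 be the 6-element set consisting of the columns of the matrix with rows (0,2,4,1,5,6), (0,6,3,4,2,7), (0,6,7,2,4,3), i.e., A = {(0,0,0), (2,6,6), (4,3,7), (1,4,2), (5,2,4), (6,7,3)}, and let L ⊂ (ℤ/8ℤ)^3 be the set of rows of the matrix with rows (0,0,0), (0,1,1), (1,0,0), (0,1,0), (0,0,1), (7,1,1). Then L is a spectrum of A in (ℤ/8ℤ)^3: the 6 × 6 matrix with entries e^{2πi⟨l,a⟩/8}, l ∈ L, a ∈ A, is a complex Hadamard matrix, so A is a spectral set in (ℤ/8ℤ)^3. -/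

import Mathlib

open scoped ComplexConjugate

/-- A `k × k` complex matrix is a complex Hadamard matrix if all its entries have
absolute value `1` and `M * Mᴴ = k • 1` (equivalently, rows are pairwise orthogonal). -/
def IsComplexHadamard {k : ℕ} (M : Matrix (Fin k) (Fin k) ℂ) : Prop :=
  (∀ i j, ‖M i j‖ = 1) ∧ M * M.conjTranspose = (k : ℂ) • 1

/-- A finite subset `A` of an abelian group `G` is spectral if there is a set `Λ` of
characters of `G` with `|Λ| = |A|` such that any two distinct characters of `Λ` are
orthogonal when restricted to `A`. -/
def IsSpectral {G : Type*} [AddCommGroup G] (A : Finset G) : Prop :=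
  ∃ Λ : Finset (AddChar G ℂ), Λ.card = A.card ∧
    ∀ χ ∈ Λ, ∀ ψ ∈ Λ, χ ≠ ψ → ∑ a ∈ A, χ a * (starRingEnd ℂ) (ψ a) = 0

/-- The columns of `A`: a 6-element subset of `(ℤ/8ℤ)^3`. -/
def aVec : Fin 6 → (Fin 3 → ZMod 8) :=
  ![![0, 0, 0], ![2, 6, 6], ![4, 3, 7], ![1, 4, 2], ![5, 2, 4], ![6, 7, 3]]

/-- The rows of `L`: a 6-element subset of `(ℤ/8ℤ)^3`. -/
def lVec : Fin 6 → (Fin 3 → ZMod 8) :=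
  ![![0, 0, 0], ![0, 1, 1], ![1, 0, 0], ![0, 1, 0], ![0, 0, 1], ![7, 1, 1]]

/-- `L` is a spectrum of `A` in `(ℤ/8ℤ)^3`: the `6 × 6` matrix with entries
`e^{2πi⟨l,a⟩/8}` is a complex Hadamard matrix, and hence `A` is spectral. -/

noncomputable def zeta : ℂ := Complex.exp (2 * Real.pi * Complex.I / 8)

lemma zeta_pow_eight : zeta ^ 8 = 1 := by
  rw [zeta, ← Complex.exp_nat_mul]
  rw [show (8:ℕ) * (2 * Real.pi * Complex.I / 8) = 2 * Real.pi * Complex.I by push_cast; ring]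
  exact Complex.exp_two_pi_mul_I

lemma zeta_pow_four : zeta ^ 4 = -1 := by
  rw [zeta, ← Complex.exp_nat_mul]
  rw [show (4:ℕ) * (2 * Real.pi * Complex.I / 8) = Real.pi * Complex.I by push_cast; ring]
  exact Complex.exp_pi_mul_I

lemma zeta_ne_zero : zeta ≠ 0 := Complex.exp_ne_zero _

lemma conj_zeta : (starRingEnd ℂ) zeta = zeta ^ 7 := by
  have h1 : zeta * (starRingEnd ℂ) zeta = 1 := by
    rw [zeta, ← Complex.exp_conj, ← Complex.exp_add]
    rw [show (2 * Real.pi * Complex.I / 8) + (starRingEnd ℂ) (2 * Real.pi * Complex.I / 8) = 0 by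
      simp [map_div₀, map_mul, map_ofNat, Complex.conj_I, Complex.conj_ofReal]; ring]
    exact Complex.exp_zero
  have h2 : zeta * zeta ^ 7 = 1 := by rw [← pow_succ']; exact zeta_pow_eight
  exact mul_left_cancel₀ zeta_ne_zero (h1.trans h2.symm)

lemma zeta_pow_mod (n : ℕ) : zeta ^ n = zeta ^ (n % 8) := by
  conv_lhs => rw [← Nat.div_add_mod n 8]
  rw [pow_add, pow_mul, zeta_pow_eight, one_pow, one_mul]

lemma term_eq (a b : ℕ) : zeta ^ a * (starRingEnd ℂ) (zeta ^ b) = zeta ^ ((a + 7*b) % 8) := by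
  rw [map_pow, conj_zeta, ← pow_mul, ← pow_add, ← zeta_pow_mod]

/-- exponent of the Hadamard matrix entry. -/
def expo (m j : Fin 6) : ℕ := (∑ i, lVec m i * aVec j i).val

lemma key_diag (m : Fin 6) :
    ∑ j, zeta ^ expo m j * (starRingEnd ℂ) (zeta ^ expo m j) = 6 := by
  have h : ∀ a : ℕ, zeta ^ a * (starRingEnd ℂ) (zeta ^ a) = 1 := by
    intro a
    rw [term_eq, show (a + 7*a) % 8 = 0 by omega, pow_zero]
  simp only [Fin.sum_univ_six, h]
  norm_num

lemma key_ne (m m' : Fin 6) (h : m ≠ m') :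
    ∑ j, zeta ^ expo m j * (starRingEnd ℂ) (zeta ^ expo m' j) = 0 := by
  have h4 := zeta_pow_four
  have hm : m = 0 ∨ m = 1 ∨ m = 2 ∨ m = 3 ∨ m = 4 ∨ m = 5 := by
    fin_cases m <;> simp
  have hm' : m' = 0 ∨ m' = 1 ∨ m' = 2 ∨ m' = 3 ∨ m' = 4 ∨ m' = 5 := by
    fin_cases m' <;> simp
  simp only [term_eq, Fin.sum_univ_six]
  rcases hm with rfl | rfl | rfl | rfl | rfl | rfl <;>
    rcases hm' with rfl | rfl | rfl | rfl | rfl | rfl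
  · exact absurd rfl h
  · simp only [show (expo 0 0 + 7 * expo 1 0) % 8 = 0 from by decide,
        show (expo 0 1 + 7 * expo 1 1) % 8 = 4 from by decide,
        show (expo 0 2 + 7 * expo 1 2) % 8 = 6 from by decide,
        show (expo 0 3 + 7 * expo 1 3) % 8 = 2 from by decide,
        show (expo 0 4 + 7 * expo 1 4) % 8 = 2 from by decide,
        show (expo 0 5 + 7 * expo 1 5) % 8 = 6 from by decide]
    linear_combination (1 + 2*zeta^2) * h4
  · simp only [show (expo 0 0 + 7 * expo 2 0) % 8 = 0 from by decide,
        show (expo 0 1 + 7 * expo 2 1) % 8 = 6 from by decide,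
        show (expo 0 2 + 7 * expo 2 2) % 8 = 4 from by decide,
        show (expo 0 3 + 7 * expo 2 3) % 8 = 7 from by decide,
        show (expo 0 4 + 7 * expo 2 4) % 8 = 3 from by decide,
        show (expo 0 5 + 7 * expo 2 5) % 8 = 2 from by decide]
    linear_combination (1 + zeta^2 + zeta^3) * h4
  · simp only [show (expo 0 0 + 7 * expo 3 0) % 8 = 0 from by decide,
        show (expo 0 1 + 7 * expo 3 1) % 8 = 2 from by decide,
        show (expo 0 2 + 7 * expo 3 2) % 8 = 5 from by decide,
        show (expo 0 3 + 7 * expo 3 3) % 8 = 4 from by decide,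
        show (expo 0 4 + 7 * expo 3 4) % 8 = 6 from by decide,
        show (expo 0 5 + 7 * expo 3 5) % 8 = 1 from by decide]
    linear_combination (1 + zeta + zeta^2) * h4
  · simp only [show (expo 0 0 + 7 * expo 4 0) % 8 = 0 from by decide,
        show (expo 0 1 + 7 * expo 4 1) % 8 = 2 from by decide,
        show (expo 0 2 + 7 * expo 4 2) % 8 = 1 from by decide,
        show (expo 0 3 + 7 * expo 4 3) % 8 = 6 from by decide,
        show (expo 0 4 + 7 * expo 4 4) % 8 = 4 from by decide,
        show (expo 0 5 + 7 * expo 4 5) % 8 = 5 from by decide]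
    linear_combination (1 + zeta + zeta^2) * h4
  · simp only [show (expo 0 0 + 7 * expo 5 0) % 8 = 0 from by decide,
        show (expo 0 1 + 7 * expo 5 1) % 8 = 6 from by decide,
        show (expo 0 2 + 7 * expo 5 2) % 8 = 2 from by decide,
        show (expo 0 3 + 7 * expo 5 3) % 8 = 3 from by decide,
        show (expo 0 4 + 7 * expo 5 4) % 8 = 7 from by decide,
        show (expo 0 5 + 7 * expo 5 5) % 8 = 4 from by decide]
    linear_combination (1 + zeta^2 + zeta^3) * h4
  · simp only [show (expo 1 0 + 7 * expo 0 0) % 8 = 0 from by decide,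
        show (expo 1 1 + 7 * expo 0 1) % 8 = 4 from by decide,
        show (expo 1 2 + 7 * expo 0 2) % 8 = 2 from by decide,
        show (expo 1 3 + 7 * expo 0 3) % 8 = 6 from by decide,
        show (expo 1 4 + 7 * expo 0 4) % 8 = 6 from by decide,
        show (expo 1 5 + 7 * expo 0 5) % 8 = 2 from by decide]
    linear_combination (1 + 2*zeta^2) * h4
  · exact absurd rfl h
  · simp only [show (expo 1 0 + 7 * expo 2 0) % 8 = 0 from by decide,
        show (expo 1 1 + 7 * expo 2 1) % 8 = 2 from by decide,
        show (expo 1 2 + 7 * expo 2 2) % 8 = 6 from by decide,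
        show (expo 1 3 + 7 * expo 2 3) % 8 = 5 from by decide,
        show (expo 1 4 + 7 * expo 2 4) % 8 = 1 from by decide,
        show (expo 1 5 + 7 * expo 2 5) % 8 = 4 from by decide]
    linear_combination (1 + zeta + zeta^2) * h4
  · simp only [show (expo 1 0 + 7 * expo 3 0) % 8 = 0 from by decide,
        show (expo 1 1 + 7 * expo 3 1) % 8 = 6 from by decide,
        show (expo 1 2 + 7 * expo 3 2) % 8 = 7 from by decide,
        show (expo 1 3 + 7 * expo 3 3) % 8 = 2 from by decide,
        show (expo 1 4 + 7 * expo 3 4) % 8 = 4 from by decide,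
        show (expo 1 5 + 7 * expo 3 5) % 8 = 3 from by decide]
    linear_combination (1 + zeta^2 + zeta^3) * h4
  · simp only [show (expo 1 0 + 7 * expo 4 0) % 8 = 0 from by decide,
        show (expo 1 1 + 7 * expo 4 1) % 8 = 6 from by decide,
        show (expo 1 2 + 7 * expo 4 2) % 8 = 3 from by decide,
        show (expo 1 3 + 7 * expo 4 3) % 8 = 4 from by decide,
        show (expo 1 4 + 7 * expo 4 4) % 8 = 2 from by decide,
        show (expo 1 5 + 7 * expo 4 5) % 8 = 7 from by decide]
    linear_combination (1 + zeta^2 + zeta^3) * h4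
  · simp only [show (expo 1 0 + 7 * expo 5 0) % 8 = 0 from by decide,
        show (expo 1 1 + 7 * expo 5 1) % 8 = 2 from by decide,
        show (expo 1 2 + 7 * expo 5 2) % 8 = 4 from by decide,
        show (expo 1 3 + 7 * expo 5 3) % 8 = 1 from by decide,
        show (expo 1 4 + 7 * expo 5 4) % 8 = 5 from by decide,
        show (expo 1 5 + 7 * expo 5 5) % 8 = 6 from by decide]
    linear_combination (1 + zeta + zeta^2) * h4
  · simp only [show (expo 2 0 + 7 * expo 0 0) % 8 = 0 from by decide,
        show (expo 2 1 + 7 * expo 0 1) % 8 = 2 from by decide,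
        show (expo 2 2 + 7 * expo 0 2) % 8 = 4 from by decide,
        show (expo 2 3 + 7 * expo 0 3) % 8 = 1 from by decide,
        show (expo 2 4 + 7 * expo 0 4) % 8 = 5 from by decide,
        show (expo 2 5 + 7 * expo 0 5) % 8 = 6 from by decide]
    linear_combination (1 + zeta + zeta^2) * h4
  · simp only [show (expo 2 0 + 7 * expo 1 0) % 8 = 0 from by decide,
        show (expo 2 1 + 7 * expo 1 1) % 8 = 6 from by decide,
        show (expo 2 2 + 7 * expo 1 2) % 8 = 2 from by decide,
        show (expo 2 3 + 7 * expo 1 3) % 8 = 3 from by decide,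
        show (expo 2 4 + 7 * expo 1 4) % 8 = 7 from by decide,
        show (expo 2 5 + 7 * expo 1 5) % 8 = 4 from by decide]
    linear_combination (1 + zeta^2 + zeta^3) * h4
  · exact absurd rfl h
  · simp only [show (expo 2 0 + 7 * expo 3 0) % 8 = 0 from by decide,
        show (expo 2 1 + 7 * expo 3 1) % 8 = 4 from by decide,
        show (expo 2 2 + 7 * expo 3 2) % 8 = 1 from by decide,
        show (expo 2 3 + 7 * expo 3 3) % 8 = 5 from by decide,
        show (expo 2 4 + 7 * expo 3 4) % 8 = 3 from by decide,
        show (expo 2 5 + 7 * expo 3 5) % 8 = 7 from by decide]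
    linear_combination (1 + zeta + zeta^3) * h4
  · simp only [show (expo 2 0 + 7 * expo 4 0) % 8 = 0 from by decide,
        show (expo 2 1 + 7 * expo 4 1) % 8 = 4 from by decide,
        show (expo 2 2 + 7 * expo 4 2) % 8 = 5 from by decide,
        show (expo 2 3 + 7 * expo 4 3) % 8 = 7 from by decide,
        show (expo 2 4 + 7 * expo 4 4) % 8 = 1 from by decide,
        show (expo 2 5 + 7 * expo 4 5) % 8 = 3 from by decide]
    linear_combination (1 + zeta + zeta^3) * h4
  · simp only [show (expo 2 0 + 7 * expo 5 0) % 8 = 0 from by decide,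
        show (expo 2 1 + 7 * expo 5 1) % 8 = 0 from by decide,
        show (expo 2 2 + 7 * expo 5 2) % 8 = 6 from by decide,
        show (expo 2 3 + 7 * expo 5 3) % 8 = 4 from by decide,
        show (expo 2 4 + 7 * expo 5 4) % 8 = 4 from by decide,
        show (expo 2 5 + 7 * expo 5 5) % 8 = 2 from by decide]
    linear_combination (2*1 + zeta^2) * h4
  · simp only [show (expo 3 0 + 7 * expo 0 0) % 8 = 0 from by decide,
        show (expo 3 1 + 7 * expo 0 1) % 8 = 6 from by decide,
        show (expo 3 2 + 7 * expo 0 2) % 8 = 3 from by decide,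
        show (expo 3 3 + 7 * expo 0 3) % 8 = 4 from by decide,
        show (expo 3 4 + 7 * expo 0 4) % 8 = 2 from by decide,
        show (expo 3 5 + 7 * expo 0 5) % 8 = 7 from by decide]
    linear_combination (1 + zeta^2 + zeta^3) * h4
  · simp only [show (expo 3 0 + 7 * expo 1 0) % 8 = 0 from by decide,
        show (expo 3 1 + 7 * expo 1 1) % 8 = 2 from by decide,
        show (expo 3 2 + 7 * expo 1 2) % 8 = 1 from by decide,
        show (expo 3 3 + 7 * expo 1 3) % 8 = 6 from by decide,
        show (expo 3 4 + 7 * expo 1 4) % 8 = 4 from by decide,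
        show (expo 3 5 + 7 * expo 1 5) % 8 = 5 from by decide]
    linear_combination (1 + zeta + zeta^2) * h4
  · simp only [show (expo 3 0 + 7 * expo 2 0) % 8 = 0 from by decide,
        show (expo 3 1 + 7 * expo 2 1) % 8 = 4 from by decide,
        show (expo 3 2 + 7 * expo 2 2) % 8 = 7 from by decide,
        show (expo 3 3 + 7 * expo 2 3) % 8 = 3 from by decide,
        show (expo 3 4 + 7 * expo 2 4) % 8 = 5 from by decide,
        show (expo 3 5 + 7 * expo 2 5) % 8 = 1 from by decide]
    linear_combination (1 + zeta + zeta^3) * h4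
  · exact absurd rfl h
  · simp only [show (expo 3 0 + 7 * expo 4 0) % 8 = 0 from by decide,
        show (expo 3 1 + 7 * expo 4 1) % 8 = 0 from by decide,
        show (expo 3 2 + 7 * expo 4 2) % 8 = 4 from by decide,
        show (expo 3 3 + 7 * expo 4 3) % 8 = 2 from by decide,
        show (expo 3 4 + 7 * expo 4 4) % 8 = 6 from by decide,
        show (expo 3 5 + 7 * expo 4 5) % 8 = 4 from by decide]
    linear_combination (2*1 + zeta^2) * h4
  · simp only [show (expo 3 0 + 7 * expo 5 0) % 8 = 0 from by decide,
        show (expo 3 1 + 7 * expo 5 1) % 8 = 4 from by decide,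
        show (expo 3 2 + 7 * expo 5 2) % 8 = 5 from by decide,
        show (expo 3 3 + 7 * expo 5 3) % 8 = 7 from by decide,
        show (expo 3 4 + 7 * expo 5 4) % 8 = 1 from by decide,
        show (expo 3 5 + 7 * expo 5 5) % 8 = 3 from by decide]
    linear_combination (1 + zeta + zeta^3) * h4
  · simp only [show (expo 4 0 + 7 * expo 0 0) % 8 = 0 from by decide,
        show (expo 4 1 + 7 * expo 0 1) % 8 = 6 from by decide,
        show (expo 4 2 + 7 * expo 0 2) % 8 = 7 from by decide,
        show (expo 4 3 + 7 * expo 0 3) % 8 = 2 from by decide,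
        show (expo 4 4 + 7 * expo 0 4) % 8 = 4 from by decide,
        show (expo 4 5 + 7 * expo 0 5) % 8 = 3 from by decide]
    linear_combination (1 + zeta^2 + zeta^3) * h4
  · simp only [show (expo 4 0 + 7 * expo 1 0) % 8 = 0 from by decide,
        show (expo 4 1 + 7 * expo 1 1) % 8 = 2 from by decide,
        show (expo 4 2 + 7 * expo 1 2) % 8 = 5 from by decide,
        show (expo 4 3 + 7 * expo 1 3) % 8 = 4 from by decide,
        show (expo 4 4 + 7 * expo 1 4) % 8 = 6 from by decide,
        show (expo 4 5 + 7 * expo 1 5) % 8 = 1 from by decide]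
    linear_combination (1 + zeta + zeta^2) * h4
  · simp only [show (expo 4 0 + 7 * expo 2 0) % 8 = 0 from by decide,
        show (expo 4 1 + 7 * expo 2 1) % 8 = 4 from by decide,
        show (expo 4 2 + 7 * expo 2 2) % 8 = 3 from by decide,
        show (expo 4 3 + 7 * expo 2 3) % 8 = 1 from by decide,
        show (expo 4 4 + 7 * expo 2 4) % 8 = 7 from by decide,
        show (expo 4 5 + 7 * expo 2 5) % 8 = 5 from by decide]
    linear_combination (1 + zeta + zeta^3) * h4
  · simp only [show (expo 4 0 + 7 * expo 3 0) % 8 = 0 from by decide,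
        show (expo 4 1 + 7 * expo 3 1) % 8 = 0 from by decide,
        show (expo 4 2 + 7 * expo 3 2) % 8 = 4 from by decide,
        show (expo 4 3 + 7 * expo 3 3) % 8 = 6 from by decide,
        show (expo 4 4 + 7 * expo 3 4) % 8 = 2 from by decide,
        show (expo 4 5 + 7 * expo 3 5) % 8 = 4 from by decide]
    linear_combination (2*1 + zeta^2) * h4
  · exact absurd rfl h
  · simp only [show (expo 4 0 + 7 * expo 5 0) % 8 = 0 from by decide,
        show (expo 4 1 + 7 * expo 5 1) % 8 = 4 from by decide,
        show (expo 4 2 + 7 * expo 5 2) % 8 = 1 from by decide,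
        show (expo 4 3 + 7 * expo 5 3) % 8 = 5 from by decide,
        show (expo 4 4 + 7 * expo 5 4) % 8 = 3 from by decide,
        show (expo 4 5 + 7 * expo 5 5) % 8 = 7 from by decide]
    linear_combination (1 + zeta + zeta^3) * h4
  · simp only [show (expo 5 0 + 7 * expo 0 0) % 8 = 0 from by decide,
        show (expo 5 1 + 7 * expo 0 1) % 8 = 2 from by decide,
        show (expo 5 2 + 7 * expo 0 2) % 8 = 6 from by decide,
        show (expo 5 3 + 7 * expo 0 3) % 8 = 5 from by decide,
        show (expo 5 4 + 7 * expo 0 4) % 8 = 1 from by decide,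
        show (expo 5 5 + 7 * expo 0 5) % 8 = 4 from by decide]
    linear_combination (1 + zeta + zeta^2) * h4
  · simp only [show (expo 5 0 + 7 * expo 1 0) % 8 = 0 from by decide,
        show (expo 5 1 + 7 * expo 1 1) % 8 = 6 from by decide,
        show (expo 5 2 + 7 * expo 1 2) % 8 = 4 from by decide,
        show (expo 5 3 + 7 * expo 1 3) % 8 = 7 from by decide,
        show (expo 5 4 + 7 * expo 1 4) % 8 = 3 from by decide,
        show (expo 5 5 + 7 * expo 1 5) % 8 = 2 from by decide]
    linear_combination (1 + zeta^2 + zeta^3) * h4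
  · simp only [show (expo 5 0 + 7 * expo 2 0) % 8 = 0 from by decide,
        show (expo 5 1 + 7 * expo 2 1) % 8 = 0 from by decide,
        show (expo 5 2 + 7 * expo 2 2) % 8 = 2 from by decide,
        show (expo 5 3 + 7 * expo 2 3) % 8 = 4 from by decide,
        show (expo 5 4 + 7 * expo 2 4) % 8 = 4 from by decide,
        show (expo 5 5 + 7 * expo 2 5) % 8 = 6 from by decide]
    linear_combination (2*1 + zeta^2) * h4
  · simp only [show (expo 5 0 + 7 * expo 3 0) % 8 = 0 from by decide,
        show (expo 5 1 + 7 * expo 3 1) % 8 = 4 from by decide,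
        show (expo 5 2 + 7 * expo 3 2) % 8 = 3 from by decide,
        show (expo 5 3 + 7 * expo 3 3) % 8 = 1 from by decide,
        show (expo 5 4 + 7 * expo 3 4) % 8 = 7 from by decide,
        show (expo 5 5 + 7 * expo 3 5) % 8 = 5 from by decide]
    linear_combination (1 + zeta + zeta^3) * h4
  · simp only [show (expo 5 0 + 7 * expo 4 0) % 8 = 0 from by decide,
        show (expo 5 1 + 7 * expo 4 1) % 8 = 4 from by decide,
        show (expo 5 2 + 7 * expo 4 2) % 8 = 7 from by decide,
        show (expo 5 3 + 7 * expo 4 3) % 8 = 3 from by decide,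
        show (expo 5 4 + 7 * expo 4 4) % 8 = 5 from by decide,
        show (expo 5 5 + 7 * expo 4 5) % 8 = 1 from by decide]
    linear_combination (1 + zeta + zeta^3) * h4
  · exact absurd rfl h

lemma entry_eq (m j : Fin 6) :
    Complex.exp (2 * Real.pi * Complex.I * ((∑ i, lVec m i * aVec j i).val : ℂ) / 8)
      = zeta ^ expo m j := by
  rw [expo, zeta, ← Complex.exp_nat_mul]
  congr 1
  ring

lemma abs_zeta : ‖zeta‖ = 1 := by
  rw [zeta, show 2 * Real.pi * Complex.I / 8 = ((Real.pi/4 : ℝ) : ℂ) * Complex.I by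
    push_cast; ring]
  exact Complex.norm_exp_ofReal_mul_I _

noncomputable def chi (lv : Fin 3 → ZMod 8) : AddChar (Fin 3 → ZMod 8) ℂ where
  toFun a := zeta ^ (∑ i, lv i * a i).val
  map_zero_eq_one' := by simp
  map_add_eq_mul' a b := by
    have h : (∑ i, lv i * (a + b) i) = (∑ i, lv i * a i) + (∑ i, lv i * b i) := by
      simp [mul_add, Finset.sum_add_distrib]
    simp only [h, ZMod.val_add, ← zeta_pow_mod, pow_add]

lemma chi_apply (m j : Fin 6) : chi (lVec m) (aVec j) = zeta ^ expo m j := rfl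

lemma aVec_inj : Function.Injective aVec := by decide

lemma chi_inj : Function.Injective (fun m => chi (lVec m)) := by
  intro m m' h
  by_contra hne
  have h0 := key_ne m m' hne
  have h6 := key_diag m
  rw [show (∑ j, zeta ^ expo m j * (starRingEnd ℂ) (zeta ^ expo m' j))
        = ∑ j, zeta ^ expo m j * (starRingEnd ℂ) (zeta ^ expo m j) by
      refine Finset.sum_congr rfl fun j _ => ?_
      have h' : chi (lVec m) = chi (lVec m') := h
      rw [← chi_apply, ← chi_apply, ← h']] at h0
  rw [h6] at h0
  norm_num at h0

theorem lVec_spectrum_of_aVec :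
    IsComplexHadamard
      (Matrix.of fun m j : Fin 6 =>
        Complex.exp (2 * Real.pi * Complex.I *
          ((∑ i, lVec m i * aVec j i).val : ℂ) / 8)) ∧
    IsSpectral (Finset.univ.image aVec) := by
  constructor
  · constructor
    · intro m j
      simp only [Matrix.of_apply, entry_eq, map_pow, norm_pow, abs_zeta, one_pow]
    · ext m m'
      rw [Matrix.mul_apply]
      simp only [Matrix.conjTranspose_apply, Matrix.of_apply, entry_eq, Complex.star_def]
      rw [Matrix.smul_apply, Matrix.one_apply]
      by_cases h : m = m'
      · subst h
        rw [key_diag m]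
        norm_num
      · rw [key_ne m m' h]
        simp [h]
  · refine ⟨Finset.image (fun m => chi (lVec m)) Finset.univ, ?_, ?_⟩
    · rw [Finset.card_image_of_injective _ chi_inj,
        Finset.card_image_of_injective _ aVec_inj]
    · intro χ hχ ψ hψ hne
      simp only [Finset.mem_image, Finset.mem_univ, true_and] at hχ hψ
      obtain ⟨m, rfl⟩ := hχ
      obtain ⟨m', rfl⟩ := hψ
      have hmm : m ≠ m' := fun h => hne (by rw [h])
      rw [Finset.sum_image (fun x _ y _ h => aVec_inj h)]
      simpa only [chi_apply] using key_ne m m' hmm
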